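/- Let H be a Tonelli Hamiltonian on ℝⁿ × ℝⁿ, λ > 0, and let Φᵗ be a complete flow of the λ-discounted Hamiltonian vector field. Let u : ℝⁿ → ℝ be locally Lipschitz and satisfy λu(x) + H(x, Du(x)) = 0 at every point x where u is differentiable. Define F(x,p) = λu(x) + H(x,p). Then for every (x,p) ∈ ℝⁿ × ℝⁿ and every t ≥ 0, F(Φᵗ(x,p)) ≤ F(x,p) e^{−λt}. In particular, the set {(x,p) : F(x,p) ≤ 0} is forward invariant under Φᵗ. -/

import Mathlib

open Set Filter MeasureTheory Real

noncomputable section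

abbrev E (n : ℕ) : Type := EuclideanSpace ℝ (Fin n)

noncomputable def Hp {n : ℕ} (H : E n × E n → ℝ) (x p : E n) : E n :=
  gradient (fun q => H (x, q)) p

noncomputable def Hx {n : ℕ} (H : E n × E n → ℝ) (x p : E n) : E n :=
  gradient (fun y => H (y, p)) x

noncomputable def Lv {n : ℕ} (L : E n × E n → ℝ) (x v : E n) : E n :=
  gradient (fun w => L (x, w)) v

noncomputable def Lx {n : ℕ} (L : E n × E n → ℝ) (x v : E n) : E n :=
  gradient (fun y => L (y, v)) x

/-- A Tonelli Hamiltonian. -/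
def Tonelli {n : ℕ} (H : E n × E n → ℝ) : Prop :=
  ContDiff ℝ 2 H ∧
  (∀ x p v : E n, v ≠ 0 → 0 < (inner ℝ (fderiv ℝ (fun q => Hp H x q) p v) v : ℝ)) ∧
  (∀ A : ℝ, ∃ B : ℝ, 0 ≤ B ∧ ∀ x p : E n, A * ‖p‖ - B ≤ H (x, p))

/-- `L` is the Lagrangian associated to `H` by fiberwise Legendre-Fenchel transform. -/
def IsLagrangianOf {n : ℕ} (L H : E n × E n → ℝ) : Prop :=
  ∀ x v : E n, IsLUB {r : ℝ | ∃ p : E n, r = (inner ℝ p v : ℝ) - H (x, p)} (L (x, v))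

/-- A continuous piecewise `C¹` curve on `[a,b]`, with derivative `γ'`. -/
def PiecewiseC1 {n : ℕ} (a b : ℝ) (γ γ' : ℝ → E n) : Prop :=
  ContinuousOn γ (Set.Icc a b) ∧
  ∃ s : Finset ℝ,
    (∀ t ∈ Set.Icc a b, t ∉ s → HasDerivAt γ (γ' t) t) ∧
    ContinuousOn γ' (Set.Icc a b \ s) ∧
    ∃ C : ℝ, ∀ t ∈ Set.Icc a b, ‖γ' t‖ ≤ C

/-- `u` is λ-dominated by `L`. -/
def Dominated {n : ℕ} (lam : ℝ) (L : E n × E n → ℝ) (u : E n → ℝ) : Prop :=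
  ∀ a b : ℝ, a < b → ∀ γ γ' : ℝ → E n, PiecewiseC1 a b γ γ' →
    Real.exp (lam * b) * u (γ b) - Real.exp (lam * a) * u (γ a) ≤
      ∫ t in a..b, Real.exp (lam * t) * L (γ t, γ' t)

/-- `γ` is `(u,L)`-λ-calibrated on `[a,b]`. -/
def Calibrated {n : ℕ} (lam : ℝ) (L : E n × E n → ℝ) (u : E n → ℝ)
    (a b : ℝ) (γ γ' : ℝ → E n) : Prop :=
  Real.exp (lam * b) * u (γ b) - Real.exp (lam * a) * u (γ a) =
    ∫ t in a..b, Real.exp (lam * t) * L (γ t, γ' t)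

def intVec {n : ℕ} (k : Fin n → ℤ) : E n :=
  (EuclideanSpace.equiv (Fin n) ℝ).symm (fun i => (k i : ℝ))


/-- A complete flow of the λ-discounted Hamiltonian vector field of `H`. -/
def IsDiscountedFlow {n : ℕ} (lam : ℝ) (H : E n × E n → ℝ)
    (Φ : ℝ → E n × E n → E n × E n) : Prop :=
  Φ 0 = id ∧ (∀ t s : ℝ, ∀ z : E n × E n, Φ (t + s) z = Φ t (Φ s z)) ∧
  ∀ (z : E n × E n) (t : ℝ),
    HasDerivAt (fun s => (Φ s z).1) (Hp H (Φ t z).1 (Φ t z).2) t ∧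
    HasDerivAt (fun s => (Φ s z).2) (-Hx H (Φ t z).1 (Φ t z).2 - lam • (Φ t z).2) t

/- ===== auxiliary lemmas ===== -/
open InnerProductSpace Topology intervalIntegral

section Aux

lemma aux_exp_sub_one_le {x : ℝ} (hx : 0 ≤ x) : Real.exp x - 1 ≤ x * Real.exp x := by
  have h1 := Real.add_one_le_exp (-x)
  have h2 : Real.exp (-x) = (Real.exp x)⁻¹ := Real.exp_neg x
  have h3 := Real.exp_pos x
  rw [h2] at h1
  have h4 : (1 - x) * Real.exp x ≤ 1 := by
    rw [← le_div_iff₀ h3, one_div]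
    linarith
  nlinarith

lemma aux_ae_diff {n : ℕ} {u : E n → ℝ} (h : LocallyLipschitz u) :
    ∀ᵐ w : E n ∂volume, DifferentiableAt ℝ u w := by
  rw [ae_iff]
  apply measure_null_of_locally_null
  intro x _
  obtain ⟨K, t, ht, hlip⟩ := h x
  obtain ⟨U, hUt, hUopen, hxU⟩ := mem_nhds_iff.1 ht
  refine ⟨{w | ¬DifferentiableAt ℝ u w} ∩ U,
    inter_mem_nhdsWithin _ (hUopen.mem_nhds hxU), ?_⟩
  have h2 := (hlip.mono hUt).ae_differentiableWithinAt_of_mem (μ := (volume : Measure (E n)))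
  rw [ae_iff] at h2
  refine measure_mono_null ?_ h2
  intro y hy
  simp only [mem_setOf_eq, mem_inter_iff] at *
  intro hcon
  exact hy.1 ((hcon hy.2).differentiableAt (hUopen.mem_nhds hy.2))

lemma aux_compact_lip {X Y : Type*} [MetricSpace X] [MetricSpace Y] {f : X → Y}
    (hf : LocallyLipschitz f) {K : Set X} (hK : IsCompact K) :
    ∃ C : ℝ, 0 ≤ C ∧ ∀ a ∈ K, ∀ b ∈ K, dist (f a) (f b) ≤ C * dist a b := by
  by_contra hcon
  push_neg at hcon
  choose a ha b hb hab using fun k : ℕ => hcon k (Nat.cast_nonneg k)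
  obtain ⟨x, hxK, φ, hφ, hφx⟩ := hK.tendsto_subseq ha
  obtain ⟨y, hyK, ψ, hψ, hψy⟩ := hK.tendsto_subseq (fun m => hb (φ m))
  set σ : ℕ → ℕ := φ ∘ ψ with hσ
  have hσm : ∀ m, m ≤ σ m := fun m => (hψ.id_le m).trans (hφ.id_le (ψ m))
  have haσ : Tendsto (fun m => a (σ m)) atTop (𝓝 x) := hφx.comp hψ.tendsto_atTop
  have hbσ : Tendsto (fun m => b (σ m)) atTop (𝓝 y) := hψy
  obtain ⟨D, hD⟩ := Metric.isBounded_iff.1 (hK.image hf.continuous).isBounded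
  have hd0 : Tendsto (fun m => dist (a (σ m)) (b (σ m))) atTop (𝓝 0) := by
    have hsq : ∀ m : ℕ, 1 ≤ m → dist (a (σ m)) (b (σ m)) ≤ D / m := by
      intro m hm
      have h1 : (σ m : ℝ) * dist (a (σ m)) (b (σ m)) < D :=
        (hab (σ m)).trans_le (hD (mem_image_of_mem f (ha _)) (mem_image_of_mem f (hb _)))
      have hm' : (0:ℝ) < m := by exact_mod_cast hm
      have hσm' : (m:ℝ) ≤ σ m := by exact_mod_cast hσm m
      rw [le_div_iff₀ hm']
      nlinarith [dist_nonneg (x := a (σ m)) (y := b (σ m))]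
    have hDm : Tendsto (fun m : ℕ => D / m) atTop (𝓝 0) :=
      tendsto_const_nhds.div_atTop tendsto_natCast_atTop_atTop
    refine squeeze_zero' ?_ ?_ hDm
    · exact eventually_atTop.2 ⟨0, fun m _ => dist_nonneg⟩
    · exact eventually_atTop.2 ⟨1, fun m hm => hsq m hm⟩
  have hxy : y = x := by
    have : Tendsto (fun m => dist (a (σ m)) (b (σ m))) atTop (𝓝 (dist x y)) := haσ.dist hbσ
    exact (dist_eq_zero.1 (tendsto_nhds_unique this hd0)).symm
  subst hxy
  obtain ⟨K₀, t, ht, hlip⟩ := hf y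
  obtain ⟨r, hr, hball⟩ := Metric.mem_nhds_iff.1 ht
  rw [Metric.tendsto_atTop] at haσ hbσ
  obtain ⟨m₁, hm₁⟩ := haσ r hr
  obtain ⟨m₂, hm₂⟩ := hbσ r hr
  obtain ⟨m₃, hm₃⟩ := exists_nat_gt (K₀ : ℝ)
  set m := max m₁ (max m₂ m₃)
  have hA : a (σ m) ∈ t := hball (Metric.mem_ball.2 (hm₁ m (le_max_left _ _)))
  have hB : b (σ m) ∈ t :=
    hball (Metric.mem_ball.2 (hm₂ m ((le_max_left _ _).trans (le_max_right _ _))))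
  have hlipd := hlip.dist_le_mul _ hA _ hB
  have h1 : (σ m : ℝ) * dist (a (σ m)) (b (σ m)) < dist (f (a (σ m))) (f (b (σ m))) := hab _
  have h2 : (K₀ : ℝ) < σ m := by
    have h3 : m₃ ≤ σ m := le_trans ((le_max_right _ _).trans (le_max_right _ _) : m₃ ≤ m) (hσm m)
    have : (m₃ : ℝ) ≤ σ m := by exact_mod_cast h3
    linarith
  nlinarith [dist_nonneg (x := a (σ m)) (y := b (σ m)),
    dist_nonneg (x := f (a (σ m))) (y := f (b (σ m)))]

variable {n : ℕ} {H : E n × E n → ℝ}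

lemma aux_fderiv_fiber (hd : Differentiable ℝ H) (x p : E n) :
    HasFDerivAt (fun q => H (x, q))
      ((fderiv ℝ H (x, p)).comp ((0 : E n →L[ℝ] E n).prod (ContinuousLinearMap.id ℝ (E n)))) p :=
  (hd (x, p)).hasFDerivAt.comp p ((hasFDerivAt_const x p).prodMk (hasFDerivAt_id p))

lemma aux_fderiv_base (hd : Differentiable ℝ H) (x p : E n) :
    HasFDerivAt (fun y => H (y, p))
      ((fderiv ℝ H (x, p)).comp ((ContinuousLinearMap.id ℝ (E n)).prod (0 : E n →L[ℝ] E n))) x :=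
  (hd (x, p)).hasFDerivAt.comp x ((hasFDerivAt_id x).prodMk (hasFDerivAt_const p x))

lemma aux_Hp_eq (hd : Differentiable ℝ H) (x p : E n) :
    Hp H x p = (InnerProductSpace.toDual ℝ (E n)).symm
      ((fderiv ℝ H (x, p)).comp ((0 : E n →L[ℝ] E n).prod (ContinuousLinearMap.id ℝ (E n)))) := by
  rw [Hp, gradient, (aux_fderiv_fiber hd x p).fderiv]

lemma aux_Hx_eq (hd : Differentiable ℝ H) (x p : E n) :
    Hx H x p = (InnerProductSpace.toDual ℝ (E n)).symm
      ((fderiv ℝ H (x, p)).comp ((ContinuousLinearMap.id ℝ (E n)).prod (0 : E n →L[ℝ] E n))) := by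
  rw [Hx, gradient, (aux_fderiv_base hd x p).fderiv]

lemma aux_inner_Hp (hd : Differentiable ℝ H) (x p w : E n) :
    (inner ℝ (Hp H x p) w : ℝ) = fderiv ℝ H (x, p) (0, w) := by
  rw [aux_Hp_eq hd x p, InnerProductSpace.toDual_symm_apply]
  simp

lemma aux_inner_Hx (hd : Differentiable ℝ H) (x p w : E n) :
    (inner ℝ (Hx H x p) w : ℝ) = fderiv ℝ H (x, p) (w, 0) := by
  rw [aux_Hx_eq hd x p, InnerProductSpace.toDual_symm_apply]
  simp

lemma aux_hasGradientAt_fiber (hd : Differentiable ℝ H) (x p : E n) :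
    HasGradientAt (fun q => H (x, q)) (Hp H x p) p :=
  (aux_fderiv_fiber hd x p).differentiableAt.hasGradientAt

lemma aux_Hp_cont (hH : ContDiff ℝ 2 H) : Continuous (fun z : E n × E n => Hp H z.1 z.2) := by
  have hd : Differentiable ℝ H := hH.differentiable (by norm_num)
  have h1 : Continuous (fun z : E n × E n => fderiv ℝ H z) := hH.continuous_fderiv (by norm_num)
  have h2 : Continuous (fun z : E n × E n =>
      (InnerProductSpace.toDual ℝ (E n)).symm ((fderiv ℝ H z).comp
        ((0 : E n →L[ℝ] E n).prod (ContinuousLinearMap.id ℝ (E n))))) := by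
    apply (LinearIsometryEquiv.continuous _).comp
    exact h1.clm_comp continuous_const
  have h3 : (fun z : E n × E n => Hp H z.1 z.2) = fun z : E n × E n =>
      (InnerProductSpace.toDual ℝ (E n)).symm ((fderiv ℝ H z).comp
        ((0 : E n →L[ℝ] E n).prod (ContinuousLinearMap.id ℝ (E n)))) := by
    funext z
    exact aux_Hp_eq hd z.1 z.2
  rw [h3]; exact h2

lemma aux_grad_ineq (hH : Tonelli H) (x p q : E n) :
    (inner ℝ (Hp H x p) (q - p) : ℝ) ≤ H (x, q) - H (x, p) := by
  have hd : Differentiable ℝ H := hH.1.differentiable (by norm_num)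
  by_cases hw : q - p = 0
  · have : q = p := by rwa [sub_eq_zero] at hw
    subst this; simp [inner_zero_right]
  set w := q - p with hwdef
  have hfib2 : ContDiff ℝ 2 (fun q' => H (x, q')) :=
    hH.1.comp ((contDiff_const.prodMk contDiff_id))
  have hfd : ContDiff ℝ 1 (fun q' => fderiv ℝ (fun q'' => H (x, q'')) q') :=
    hfib2.fderiv_right (by norm_num)
  have hHpdiff : Differentiable ℝ (fun q' => Hp H x q') := by
    have h0 : (fun q' => Hp H x q') = fun q' =>
        (InnerProductSpace.toDual ℝ (E n)).symm (fderiv ℝ (fun q'' => H (x, q'')) q') := by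
      funext q'; rfl
    rw [h0]
    exact (LinearIsometryEquiv.toContinuousLinearEquiv
      (InnerProductSpace.toDual ℝ (E n)).symm).differentiable.comp
      (hfd.differentiable (by norm_num))
  have hline : ∀ t : ℝ, HasDerivAt (fun t : ℝ => p + t • w) w t := by
    intro t
    simpa using ((hasDerivAt_id t).smul_const w).const_add p
  set ψ : ℝ → ℝ := fun t => (inner ℝ w (Hp H x (p + t • w)) : ℝ) with hψdef
  have hψ : ∀ t : ℝ, HasDerivAt ψ
      (inner ℝ w (fderiv ℝ (fun q' => Hp H x q') (p + t • w) w) : ℝ) t := by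
    intro t
    have h1 : HasDerivAt (fun t : ℝ => Hp H x (p + t • w))
        (fderiv ℝ (fun q' => Hp H x q') (p + t • w) w) t :=
      (hHpdiff (p + t • w)).hasFDerivAt.comp_hasDerivAt t (hline t)
    exact (innerSL ℝ w).hasFDerivAt.comp_hasDerivAt t h1
  have hψpos : ∀ t : ℝ, 0 < (inner ℝ w (fderiv ℝ (fun q' => Hp H x q') (p + t • w) w) : ℝ) := by
    intro t
    rw [real_inner_comm]
    exact hH.2.1 x (p + t • w) w hw
  have hψmono : StrictMono ψ := by
    apply strictMono_of_deriv_pos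
    intro t
    rw [(hψ t).deriv]
    exact hψpos t
  set φ : ℝ → ℝ := fun t => H (x, p + t • w) with hφdef
  have hφ : ∀ t : ℝ, HasDerivAt φ (ψ t) t := by
    intro t
    have h1 := (aux_hasGradientAt_fiber hd x (p + t • w)).hasFDerivAt.comp_hasDerivAt t (hline t)
    have h2 : (InnerProductSpace.toDual ℝ (E n)) (Hp H x (p + t • w)) w = ψ t := by
      rw [InnerProductSpace.toDual_apply_apply, hψdef, real_inner_comm]
    rwa [h2] at h1
  obtain ⟨c, hc, hslope⟩ := exists_hasDerivAt_eq_slope φ ψ one_pos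
    (fun t _ => (hφ t).continuousAt.continuousWithinAt) (fun t _ => hφ t)
  have h1 : φ 1 = H (x, q) := by simp only [hφdef, one_smul, hwdef, add_sub_cancel]
  have h0 : φ 0 = H (x, p) := by simp [hφdef]
  have hψ0 : ψ 0 = (inner ℝ (Hp H x p) (q - p) : ℝ) := by
    simp only [hψdef, zero_smul, add_zero, hwdef]
    exact real_inner_comm _ _
  have hcle : ψ 0 ≤ ψ c := le_of_lt (hψmono hc.1)
  rw [hslope, h1, h0] at hcle
  rw [← hψ0]
  linarith [hcle]

lemma aux_deriv_H_flow (hd : Differentiable ℝ H)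
    {Z : ℝ → E n × E n} {a b : E n} {s : ℝ}
    (h1 : HasDerivAt (fun t => (Z t).1) a s) (h2 : HasDerivAt (fun t => (Z t).2) b s) :
    HasDerivAt (fun t => H (Z t))
      ((inner ℝ (Hx H (Z s).1 (Z s).2) a : ℝ) + (inner ℝ (Hp H (Z s).1 (Z s).2) b : ℝ)) s := by
  have hZ : HasDerivAt Z ((a, b) : E n × E n) s := h1.prodMk h2
  have h3 := (hd (Z s)).hasFDerivAt.comp_hasDerivAt s hZ
  have h4 : fderiv ℝ H (Z s) ((a, b) : E n × E n) =
      (inner ℝ (Hx H (Z s).1 (Z s).2) a : ℝ) + (inner ℝ (Hp H (Z s).1 (Z s).2) b : ℝ) := by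
    rw [aux_inner_Hx hd, aux_inner_Hp hd, Prod.mk.eta, ← map_add]
    congr 1
    simp
  rwa [h4] at h3

lemma aux_good_translates {u : E n → ℝ} (hu : LocallyLipschitz u)
    (X : ℝ → E n) (hX : Continuous X) :
    ∀ᵐ y : E n ∂volume, ∀ᵐ s : ℝ ∂volume, DifferentiableAt ℝ u (X s + y) := by
  have hN := aux_ae_diff hu
  set N : Set (E n) := {w | ¬ DifferentiableAt ℝ u w} with hNdef
  have hNmeas : MeasurableSet N := (measurableSet_of_differentiableAt ℝ u).compl
  have hNnull : volume N = 0 := by rw [ae_iff] at hN; exact hN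
  set A : Set (ℝ × E n) := {w | X w.1 + w.2 ∈ N} with hAdef
  have hAmeas : MeasurableSet A :=
    (((hX.comp continuous_fst).add continuous_snd)).measurable hNmeas
  have hAnull : ((volume : Measure ℝ).prod (volume : Measure (E n))) A = 0 := by
    rw [Measure.measure_prod_null hAmeas]
    refine Eventually.of_forall fun s => ?_
    have h1 : Prod.mk s ⁻¹' A = (fun y => X s + y) ⁻¹' N := rfl
    show volume (Prod.mk s ⁻¹' A) = 0
    rw [h1, measure_preimage_add]
    exact hNnull
  have hswap : ((volume : Measure (E n)).prod (volume : Measure ℝ))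
      (Prod.swap ⁻¹' A) = 0 := by
    rw [MeasurePreserving.measure_preimage Measure.measurePreserving_swap
      hAmeas.nullMeasurableSet]
    exact hAnull
  have h2 := Measure.measure_ae_null_of_prod_null hswap
  filter_upwards [h2] with y hy
  rw [ae_iff]
  have h3 : {s : ℝ | ¬ DifferentiableAt ℝ u (X s + y)} = Prod.mk y ⁻¹' (Prod.swap ⁻¹' A) := rfl
  rw [h3]
  simpa using hy

lemma aux_ftc_le {f g : ℝ → ℝ} {T C : ℝ} (hT : 0 ≤ T)
    (hf : Continuous f) (hg : Continuous g)
    (hC : ∀ s ∈ Icc (0:ℝ) T, ∀ δ ∈ Ioc (0:ℝ) 1, |f (s + δ) - f s| ≤ C * δ)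
    (hae : ∀ᵐ s : ℝ, s ∈ Ioo 0 T → ∃ d, HasDerivAt f d s ∧ d ≤ g s) :
    f T - f 0 ≤ ∫ s in (0:ℝ)..T, g s := by
  set δ : ℕ → ℝ := fun k => 1 / (k + 1) with hδdef
  have hδpos : ∀ k, 0 < δ k := fun k => by positivity
  have hδle1 : ∀ k, δ k ≤ 1 := fun k => by
    rw [hδdef]; rw [div_le_one (by positivity)]; linarith [Nat.cast_nonneg (α := ℝ) k]
  have hδ0 : Tendsto δ atTop (𝓝 0) := tendsto_one_div_add_atTop_nhds_zero_nat
  set q : ℕ → ℝ → ℝ := fun k s => (f (s + δ k) - f s) / δ k with hqdef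
  have hfint : ∀ a b : ℝ, IntervalIntegrable f volume a b := fun a b => hf.intervalIntegrable a b
  have hfshift : ∀ k, Continuous (fun s => f (s + δ k)) :=
    fun k => hf.comp (continuous_id.add continuous_const)
  have step1 : ∀ k, ∫ s in (0:ℝ)..T, q k s =
      ((∫ s in T..(T + δ k), f s) - ∫ s in (0:ℝ)..(δ k), f s) / δ k := by
    intro k
    have h1 : ∫ s in (0:ℝ)..T, q k s = (∫ s in (0:ℝ)..T, (f (s + δ k) - f s)) / δ k :=
      intervalIntegral.integral_div (δ k) (fun s => f (s + δ k) - f s)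
    have h2 : ∫ s in (0:ℝ)..T, (f (s + δ k) - f s) =
        (∫ s in (0:ℝ)..T, f (s + δ k)) - ∫ s in (0:ℝ)..T, f s :=
      integral_sub ((hfshift k).intervalIntegrable _ _) (hfint _ _)
    have h3 : (∫ s in (0:ℝ)..T, f (s + δ k)) = ∫ s in (δ k)..(T + δ k), f s := by
      have := integral_comp_add_right (a := (0:ℝ)) (b := T) f (δ k)
      rwa [zero_add] at this
    have h4 : (∫ s in (0:ℝ)..(δ k), f s) + (∫ s in (δ k)..(T + δ k), f s) =
        ∫ s in (0:ℝ)..(T + δ k), f s := integral_add_adjacent_intervals (hfint _ _) (hfint _ _)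
    have h5 : (∫ s in (0:ℝ)..T, f s) + (∫ s in T..(T + δ k), f s) =
        ∫ s in (0:ℝ)..(T + δ k), f s := integral_add_adjacent_intervals (hfint _ _) (hfint _ _)
    rw [h1, h2, h3]
    congr 1
    linarith
  have key : ∀ a : ℝ, Tendsto (fun k => (∫ s in a..(a + δ k), f s) / δ k) atTop (𝓝 (f a)) := by
    intro a
    have hF : HasDerivAt (fun t => ∫ s in a..t, f s) (f a) a :=
      integral_hasDerivAt_right (hfint a a)
        hf.aestronglyMeasurable.stronglyMeasurableAtFilter hf.continuousAt
    have hslope := hasDerivAt_iff_tendsto_slope.1 hF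
    have hseq : Tendsto (fun k => a + δ k) atTop (𝓝[≠] a) := by
      rw [tendsto_nhdsWithin_iff]
      constructor
      · simpa using tendsto_const_nhds.add hδ0
      · exact Eventually.of_forall fun k => by
          simp only [mem_compl_iff, mem_singleton_iff]
          have := hδpos k; intro h; nlinarith [congrArg (· - a) h]
    have hcomp := hslope.comp hseq
    refine hcomp.congr fun k => ?_
    simp only [Function.comp_apply, slope_def_field]
    rw [intervalIntegral.integral_same]
    field_simp
    rw [sub_zero, add_sub_cancel_left]
  set μ := volume.restrict (Ioc (0:ℝ) T) with hμdef
  set G : ℝ → ℝ := fun s => min (deriv f s) (g s) with hGdef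
  have hmain : ∀ᵐ s ∂μ, Tendsto (fun k => q k s) atTop (𝓝 (G s)) ∧ |G s| ≤ C := by
    have hTnull : μ {T} = 0 := by
      rw [hμdef, Measure.restrict_apply (measurableSet_singleton T)]
      exact measure_mono_null inter_subset_left (measure_singleton T)
    have h1 : ∀ᵐ s ∂μ, s ∈ Ioc (0:ℝ) T := ae_restrict_mem measurableSet_Ioc
    have h2 : ∀ᵐ s ∂μ, s ∈ Ioo 0 T → ∃ d, HasDerivAt f d s ∧ d ≤ g s := ae_restrict_of_ae hae
    have h3 : ∀ᵐ s ∂μ, s ≠ T := by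
      rw [ae_iff]
      refine measure_mono_null ?_ hTnull
      intro s hs
      simp only [mem_setOf_eq, not_not] at hs
      simp [hs]
    filter_upwards [h1, h2, h3] with s hs1 hs2 hs3
    have hsIoo : s ∈ Ioo 0 T := ⟨hs1.1, lt_of_le_of_ne hs1.2 hs3⟩
    obtain ⟨d, hd, hdg⟩ := hs2 hsIoo
    have hderiv : deriv f s = d := hd.deriv
    have hG : G s = d := by rw [hGdef]; simp only [hderiv]; exact min_eq_left hdg
    have htend : Tendsto (fun k => q k s) atTop (𝓝 d) := by
      have hslope := hasDerivAt_iff_tendsto_slope.1 hd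
      have hseq : Tendsto (fun k => s + δ k) atTop (𝓝[≠] s) := by
        rw [tendsto_nhdsWithin_iff]
        constructor
        · simpa using tendsto_const_nhds.add hδ0
        · exact Eventually.of_forall fun k => by
            simp only [mem_compl_iff, mem_singleton_iff]
            have := hδpos k; intro h; nlinarith [congrArg (· - s) h]
      have hcomp := hslope.comp hseq
      refine hcomp.congr fun k => ?_
      simp only [Function.comp_apply, slope_def_field, hqdef]
      field_simp
      rw [add_sub_cancel_left]
    have hqb : ∀ k, |q k s| ≤ C := by
      intro k
      have hs' : s ∈ Icc (0:ℝ) T := ⟨le_of_lt hs1.1, hs1.2⟩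
      have hq1 := hC s hs' (δ k) ⟨hδpos k, hδle1 k⟩
      rw [hqdef]
      rw [abs_div, abs_of_pos (hδpos k), div_le_iff₀ (hδpos k)]
      simpa using hq1
    have hGb : |G s| ≤ C := by
      rw [hG]
      exact le_of_tendsto (htend.abs) (Eventually.of_forall hqb)
    exact ⟨hG ▸ htend, hGb⟩
  have hqmeas : ∀ k, AEStronglyMeasurable (q k) μ :=
    fun k => (((hfshift k).sub hf).div_const _).aestronglyMeasurable
  have hboundint : Integrable (fun _ : ℝ => C) μ :=
    integrableOn_const measure_Ioc_lt_top.ne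
  have hqbound : ∀ k, ∀ᵐ s ∂μ, ‖q k s‖ ≤ C := by
    intro k
    have h1 : ∀ᵐ s ∂μ, s ∈ Ioc (0:ℝ) T := ae_restrict_mem measurableSet_Ioc
    filter_upwards [h1] with s hs1
    have hs' : s ∈ Icc (0:ℝ) T := ⟨le_of_lt hs1.1, hs1.2⟩
    have hq1 := hC s hs' (δ k) ⟨hδpos k, hδle1 k⟩
    rw [Real.norm_eq_abs, hqdef, abs_div, abs_of_pos (hδpos k), div_le_iff₀ (hδpos k)]
    simpa using hq1
  have hGmeas : AEStronglyMeasurable G μ :=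
    ((measurable_deriv f).min hg.measurable).aestronglyMeasurable
  have hdct : Tendsto (fun k => ∫ s, q k s ∂μ) atTop (𝓝 (∫ s, G s ∂μ)) :=
    tendsto_integral_of_dominated_convergence (fun _ => C) hqmeas hboundint hqbound
      (hmain.mono fun s hs => hs.1)
  have hGint : Integrable G μ := by
    refine hboundint.mono' hGmeas ?_
    exact hmain.mono fun s hs => by rw [Real.norm_eq_abs]; exact hs.2
  have hqint_eq : ∀ k, ∫ s, q k s ∂μ = ∫ s in (0:ℝ)..T, q k s := by
    intro k
    rw [integral_of_le hT]
  have hlim2 : Tendsto (fun k => ∫ s in (0:ℝ)..T, q k s) atTop (𝓝 (f T - f 0)) := by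
    have h1 := (key T).sub (key 0)
    simp only [zero_add] at h1
    refine Tendsto.congr (fun k => ?_) h1
    rw [step1 k, sub_div]
  have heq : f T - f 0 = ∫ s, G s ∂μ := by
    apply tendsto_nhds_unique _ hdct
    refine Tendsto.congr (fun k => (hqint_eq k).symm) hlim2
  rw [heq, integral_of_le hT]
  exact integral_mono hGint (hg.integrableOn_Ioc) fun s => min_le_right _ _

end Aux

set_option maxHeartbeats 1000000 in
/-- `F(x,p) = λu(x) + H(x,p)` decays along the flow:
`F(Φᵗ(x,p)) ≤ F(x,p)e^{-λt}` for `t ≥ 0`; hence `{F ≤ 0}` is forward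
invariant. -/
theorem stmt_13 {n : ℕ} (hn : 1 ≤ n) (lam : ℝ) (hlam : 0 < lam)
    (H : E n × E n → ℝ) (hH : Tonelli H)
    (Φ : ℝ → E n × E n → E n × E n) (hΦ : IsDiscountedFlow lam H Φ)
    (u : E n → ℝ) (hulip : LocallyLipschitz u)
    (hHJ : ∀ x : E n, DifferentiableAt ℝ u x → lam * u x + H (x, gradient u x) = 0) :
    (∀ (z : E n × E n) (t : ℝ), 0 ≤ t →
      lam * u (Φ t z).1 + H (Φ t z) ≤ (lam * u z.1 + H z) * Real.exp (-(lam * t))) ∧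
    (∀ z : E n × E n, lam * u z.1 + H z ≤ 0 →
      ∀ t : ℝ, 0 ≤ t → lam * u (Φ t z).1 + H (Φ t z) ≤ 0) := by
  obtain ⟨hΦ0, hΦgrp, hflow⟩ := hΦ
  have hd : Differentiable ℝ H := hH.1.differentiable (by norm_num)
  have hexpc : Continuous fun s : ℝ => Real.exp (lam * s) :=
    Real.continuous_exp.comp (continuous_const.mul continuous_id)
  have main : ∀ (z : E n × E n) (T : ℝ), 0 ≤ T →
      lam * u (Φ T z).1 + H (Φ T z) ≤ (lam * u z.1 + H z) * Real.exp (-(lam * T)) := by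
    intro z T hT
    have hXc : Continuous (fun s => (Φ s z).1) :=
      continuous_iff_continuousAt.2 fun s => ((hflow z s).1).continuousAt
    have hPc : Continuous (fun s => (Φ s z).2) :=
      continuous_iff_continuousAt.2 fun s => ((hflow z s).2).continuousAt
    have hΦzc : Continuous (fun s => Φ s z) := hXc.prodMk hPc
    have hvc : Continuous (fun s => Hp H (Φ s z).1 (Φ s z).2) :=
      (aux_Hp_cont hH.1).comp (hXc.prodMk hPc)
    have hlc : Continuous (fun s =>
        (inner ℝ ((Φ s z).2) (Hp H (Φ s z).1 (Φ s z).2) : ℝ) - H (Φ s z)) :=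
      (hPc.inner hvc).sub (hd.continuous.comp hΦzc)
    set ℓ : ℝ → ℝ := fun s =>
      (inner ℝ ((Φ s z).2) (Hp H (Φ s z).1 (Φ s z).2) : ℝ) - H (Φ s z) with hldef
    set I : ℝ := ∫ s in (0:ℝ)..T, Real.exp (lam * s) * ℓ s with hIdef
    have hexp : ∀ s : ℝ, HasDerivAt (fun t => Real.exp (lam * t))
        (Real.exp (lam * s) * lam) s := by
      intro s
      have h1 : HasDerivAt (fun t : ℝ => lam * t) lam s := by
        simpa using (hasDerivAt_id s).const_mul lam
      exact h1.exp
    have hz0 : (Φ 0 z).1 = z.1 := by rw [hΦ0]; rfl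
    have hz0' : Φ 0 z = z := by rw [hΦ0]; rfl
    -- Part A
    have hGder : ∀ s : ℝ, HasDerivAt (fun t => Real.exp (lam * t) * H (Φ t z))
        (-lam * (Real.exp (lam * s) * ℓ s)) s := by
      intro s
      have h1 := aux_deriv_H_flow hd (Z := fun t => Φ t z) (hflow z s).1 (hflow z s).2
      have h2 := (hexp s).mul h1
      refine HasDerivAt.congr_deriv (f := fun t => Real.exp (lam * t) * H (Φ t z)) h2 ?_
      rw [hldef]
      simp only [inner_sub_right, inner_neg_right, real_inner_smul_right]
      rw [real_inner_comm ((Φ s z).2) (Hp H (Φ s z).1 (Φ s z).2),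
        real_inner_comm (Hx H (Φ s z).1 (Φ s z).2) (Hp H (Φ s z).1 (Φ s z).2)]
      ring
    have hpartA : Real.exp (lam * T) * H (Φ T z) - H z = -lam * I := by
      have h1 := intervalIntegral.integral_eq_sub_of_hasDerivAt (a := 0) (b := T)
        (f := fun t => Real.exp (lam * t) * H (Φ t z))
        (f' := fun s => -lam * (Real.exp (lam * s) * ℓ s))
        (fun s _ => hGder s)
        ((continuous_const.mul (hexpc.mul hlc)).intervalIntegrable 0 T)
      rw [intervalIntegral.integral_const_mul] at h1
      simp only [hz0', mul_zero, Real.exp_zero, one_mul] at h1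
      rw [← hIdef] at h1
      linarith [h1]
    -- Part B
    have hpartB : Real.exp (lam * T) * u ((Φ T z).1) - u z.1 ≤ I := by
      refine le_of_forall_pos_le_add ?_
      intro ε hε
      set K₂ : Set (E n) := (fun w : ℝ × E n => (Φ w.1 z).1 + w.2) ''
          (Icc 0 (T+1) ×ˢ Metric.closedBall 0 1) with hK2def
      have hK₂ : IsCompact K₂ := ((isCompact_Icc).prod (isCompact_closedBall _ _)).image
          ((hXc.comp continuous_fst).add continuous_snd)
      obtain ⟨Ku, hKu0, hKu⟩ := aux_compact_lip hulip hK₂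
      have hmem : ∀ s, s ∈ Icc (0:ℝ) (T+1) → ∀ y : E n, ‖y‖ ≤ 1 → (Φ s z).1 + y ∈ K₂ := by
        intro s hs y hy
        exact ⟨(s, y), ⟨hs, by simpa [Metric.mem_closedBall, dist_zero_right] using hy⟩, rfl⟩
      have hmem0 : ∀ s, s ∈ Icc (0:ℝ) (T+1) → (Φ s z).1 ∈ K₂ := by
        intro s hs
        simpa using hmem s hs 0 (by simp)
      have hnbhd : ∀ s, s ∈ Icc (0:ℝ) (T+1) → ∀ y : E n, ‖y‖ ≤ 1/2 →
          K₂ ∈ 𝓝 ((Φ s z).1 + y) := by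
        intro s hs y hy
        refine Filter.mem_of_superset (Metric.ball_mem_nhds _ (by norm_num : (0:ℝ) < 1/2)) ?_
        intro w hw
        have h1 : w = (Φ s z).1 + (y + (w - ((Φ s z).1 + y))) := by abel
        rw [h1]
        refine hmem s hs _ ?_
        have h2 : ‖w - ((Φ s z).1 + y)‖ < 1/2 := by
          rw [Metric.mem_ball, dist_eq_norm] at hw; exact hw
        calc ‖y + (w - ((Φ s z).1 + y))‖ ≤ ‖y‖ + ‖w - ((Φ s z).1 + y)‖ := norm_add_le _ _
          _ ≤ 1 := by linarith
      have hKuLip : LipschitzOnWith (Real.toNNReal Ku) u K₂ := by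
        rw [lipschitzOnWith_iff_dist_le_mul]
        intro a ha b hb
        rw [Real.coe_toNNReal Ku hKu0]
        exact hKu a ha b hb
      have hgradb : ∀ w : E n, K₂ ∈ 𝓝 w → DifferentiableAt ℝ u w → ‖gradient u w‖ ≤ Ku := by
        intro w hw hdw
        have h1 := norm_fderiv_le_of_lipschitzOn ℝ hw hKuLip
        have h2 : ‖gradient u w‖ = ‖fderiv ℝ u w‖ := by
          rw [gradient]; exact LinearIsometryEquiv.norm_map _ _
        rw [h2]
        exact h1.trans_eq (Real.coe_toNNReal Ku hKu0)
      obtain ⟨Mp, hMp⟩ := (isCompact_Icc (a := (0:ℝ)) (b := T)).exists_bound_of_continuousOn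
        hPc.continuousOn
      obtain ⟨CX, hCX⟩ := (isCompact_Icc (a := (0:ℝ)) (b := T+1)).exists_bound_of_continuousOn
        hvc.continuousOn
      obtain ⟨Mu, hMu⟩ := hK₂.exists_bound_of_continuousOn hulip.continuous.continuousOn
      have hMp0 : 0 ≤ Mp := le_trans (norm_nonneg _) (hMp 0 ⟨le_refl 0, hT⟩)
      have hXlip : ∀ a ∈ Icc (0:ℝ) (T+1), ∀ b ∈ Icc (0:ℝ) (T+1),
          ‖(Φ b z).1 - (Φ a z).1‖ ≤ CX * ‖b - a‖ :=
        fun a ha b hb => (convex_Icc (0:ℝ) (T+1)).norm_image_sub_le_of_norm_hasDerivWithin_le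
          (fun s _ => ((hflow z s).1).hasDerivWithinAt) (fun s hs => hCX s hs) ha hb
      set Err : ℝ × E n → ℝ := fun w =>
        (Ku + Mp) * ‖Hp H ((Φ w.1 z).1 + w.2) ((Φ w.1 z).2)
            - Hp H ((Φ w.1 z).1) ((Φ w.1 z).2)‖
        + |H (((Φ w.1 z).1), ((Φ w.1 z).2)) - H (((Φ w.1 z).1 + w.2), ((Φ w.1 z).2))|
        with hErrdef
      have hErrc : Continuous Err := by
        refine Continuous.add (continuous_const.mul (Continuous.norm ?_)) (Continuous.abs ?_)
        · exact ((aux_Hp_cont hH.1).comp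
            (((hXc.comp continuous_fst).add continuous_snd).prodMk
              (hPc.comp continuous_fst))).sub
            ((aux_Hp_cont hH.1).comp
              ((hXc.comp continuous_fst).prodMk (hPc.comp continuous_fst)))
        · exact (hd.continuous.comp
            ((hXc.comp continuous_fst).prodMk (hPc.comp continuous_fst))).sub
            (hd.continuous.comp
              (((hXc.comp continuous_fst).add continuous_snd).prodMk
                (hPc.comp continuous_fst)))
      have hErrnn : ∀ w, 0 ≤ Err w := fun w =>
        add_nonneg (mul_nonneg (by linarith) (norm_nonneg _)) (abs_nonneg _)
      set ε1 : ℝ := ε / (2 * (Real.exp (lam * T) * (T + 1) + 1)) with hε1def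
      have hε1pos : 0 < ε1 := by
        rw [hε1def]
        have h2 : 0 < 2 * (Real.exp (lam * T) * (T + 1) + 1) := by
          have := mul_pos (Real.exp_pos (lam * T)) (by linarith : (0:ℝ) < T + 1)
          linarith
        exact div_pos hε h2
      obtain ⟨δ0, hδ0pos, hδ0⟩ : ∃ δ0 > 0, ∀ s ∈ Icc (0:ℝ) T, ∀ y : E n, ‖y‖ < δ0 →
          Err (s, y) < ε1 := by
        have huc := ((isCompact_Icc (a := (0:ℝ)) (b := T+1)).prod
          (isCompact_closedBall (0 : E n) 1)).uniformContinuousOn_of_continuous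
          hErrc.continuousOn
        rw [Metric.uniformContinuousOn_iff] at huc
        obtain ⟨δ0, hδ0pos, hδ0⟩ := huc ε1 hε1pos
        refine ⟨min δ0 1, lt_min hδ0pos one_pos, ?_⟩
        intro s hs y hy
        have hy1 : ‖y‖ ≤ 1 := le_of_lt (lt_of_lt_of_le hy (min_le_right _ _))
        have hmem1 : ((s, y) : ℝ × E n) ∈ Icc (0:ℝ) (T+1) ×ˢ Metric.closedBall (0:E n) 1 :=
          ⟨⟨hs.1, by linarith [hs.2]⟩, by simpa [Metric.mem_closedBall, dist_zero_right] using hy1⟩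
        have hmem2 : ((s, (0:E n)) : ℝ × E n) ∈ Icc (0:ℝ) (T+1) ×ˢ Metric.closedBall (0:E n) 1 :=
          ⟨⟨hs.1, by linarith [hs.2]⟩, by simp⟩
        have hdist : dist ((s, y) : ℝ × E n) ((s, (0:E n)) : ℝ × E n) < δ0 := by
          rw [Prod.dist_eq]
          simp only [dist_self, dist_zero_right]
          rw [max_eq_right (norm_nonneg _)]
          exact lt_of_lt_of_le hy (min_le_left _ _)
        have h3 := hδ0 _ hmem1 _ hmem2 hdist
        rw [Real.dist_eq] at h3
        have hErr0 : Err (s, (0:E n)) = 0 := by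
          rw [hErrdef]; simp
        rw [hErr0, sub_zero, abs_of_nonneg (hErrnn _)] at h3
        exact h3
      set r : ℝ := min δ0 (min (1/2) (ε / (2 * ((Real.exp (lam * T) + 1) * Ku + 1)))) with hrdef
      have hden2 : (0:ℝ) < 2 * ((Real.exp (lam * T) + 1) * Ku + 1) := by
        have := mul_nonneg (by linarith [Real.exp_pos (lam * T)] :
          (0:ℝ) ≤ Real.exp (lam * T) + 1) hKu0
        linarith
      have hrpos : 0 < r := lt_min hδ0pos (lt_min (by norm_num) (by positivity))
      obtain ⟨y, hyr, hygood⟩ : ∃ y : E n, ‖y‖ < r ∧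
          ∀ᵐ s : ℝ, DifferentiableAt ℝ u ((Φ s z).1 + y) := by
        by_contra hcon
        push_neg at hcon
        have hsub : Metric.ball (0 : E n) r ⊆
            {y | ¬ ∀ᵐ s : ℝ, DifferentiableAt ℝ u ((Φ s z).1 + y)} := by
          intro y hy
          simp only [mem_setOf_eq]
          exact Filter.not_eventually.mpr (hcon y (by rwa [Metric.mem_ball, dist_zero_right] at hy))
        have h1 : volume (Metric.ball (0 : E n) r) = 0 := by
          refine measure_mono_null hsub ?_
          have h2 := aux_good_translates hulip (fun s => (Φ s z).1) hXc
          rw [ae_iff] at h2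
          exact h2
        exact absurd h1 (Metric.measure_ball_pos volume 0 hrpos).ne'
      have hyhalf : ‖y‖ ≤ 1/2 :=
        le_trans hyr.le ((min_le_right _ _).trans (min_le_left _ _))
      have hy1 : ‖y‖ ≤ 1 := le_trans hyhalf (by norm_num)
      set h : ℝ → ℝ := fun s => Real.exp (lam * s) * u ((Φ s z).1 + y) with hhdef
      have hγc : Continuous (fun s => (Φ s z).1 + y) := hXc.add continuous_const
      have hhc : Continuous h := hexpc.mul (hulip.continuous.comp hγc)
      set Ch : ℝ := Real.exp (lam * (T+1)) * (Ku * CX)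
        + Real.exp (lam * T) * (lam * Real.exp lam) * Mu with hChdef
      have hquot : ∀ s ∈ Icc (0:ℝ) T, ∀ δq ∈ Ioc (0:ℝ) 1, |h (s + δq) - h s| ≤ Ch * δq := by
        intro s hs δq hδq
        have hs1 : s ∈ Icc (0:ℝ) (T+1) := ⟨hs.1, by linarith [hs.2]⟩
        have hs2 : s + δq ∈ Icc (0:ℝ) (T+1) :=
          ⟨by linarith [hs.1, hδq.1.le], by linarith [hs.2, hδq.2]⟩
        have hw1 : (Φ s z).1 + y ∈ K₂ := hmem s hs1 y hy1
        have hw2 : (Φ (s+δq) z).1 + y ∈ K₂ := hmem _ hs2 y hy1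
        have hid : h (s + δq) - h s =
            Real.exp (lam * (s + δq)) * (u ((Φ (s+δq) z).1 + y) - u ((Φ s z).1 + y))
            + (Real.exp (lam * (s + δq)) - Real.exp (lam * s)) * u ((Φ s z).1 + y) := by
          rw [hhdef]; ring
        have hb1 : |u ((Φ (s+δq) z).1 + y) - u ((Φ s z).1 + y)| ≤ Ku * (CX * δq) := by
          have h1 := hKu _ hw2 _ hw1
          rw [Real.dist_eq] at h1
          have h2 : dist ((Φ (s+δq) z).1 + y) ((Φ s z).1 + y)
              = ‖(Φ (s+δq) z).1 - (Φ s z).1‖ := by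
            rw [dist_eq_norm]
            congr 1
            abel
          have h3 : ‖(Φ (s+δq) z).1 - (Φ s z).1‖ ≤ CX * δq := by
            have h4 := hXlip s hs1 (s+δq) hs2
            have h5 : ‖(s + δq) - s‖ = δq := by
              rw [add_sub_cancel_left, Real.norm_of_nonneg hδq.1.le]
            rwa [h5] at h4
          rw [h2] at h1
          calc |u ((Φ (s+δq) z).1 + y) - u ((Φ s z).1 + y)|
              ≤ Ku * ‖(Φ (s+δq) z).1 - (Φ s z).1‖ := h1
            _ ≤ Ku * (CX * δq) := mul_le_mul_of_nonneg_left h3 hKu0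
        have hb2 : Real.exp (lam * (s + δq)) ≤ Real.exp (lam * (T+1)) :=
          Real.exp_le_exp.2 (mul_le_mul_of_nonneg_left
            (by linarith [hs.2, hδq.2] : s + δq ≤ T + 1) hlam.le)
        have hb3 : Real.exp (lam * (s+δq)) - Real.exp (lam*s)
            ≤ Real.exp (lam*T) * (lam * Real.exp lam) * δq := by
          have h1 : Real.exp (lam * (s+δq)) - Real.exp (lam*s)
              = Real.exp (lam*s) * (Real.exp (lam*δq) - 1) := by
            rw [mul_add, Real.exp_add]; ring
          have h2 := aux_exp_sub_one_le (x := lam * δq) (mul_nonneg hlam.le hδq.1.le)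
          have h3 : Real.exp (lam * δq) ≤ Real.exp lam :=
            Real.exp_le_exp.2 (by
              have := mul_le_mul_of_nonneg_left hδq.2 hlam.le
              linarith)
          have h4 : Real.exp (lam * s) ≤ Real.exp (lam * T) :=
            Real.exp_le_exp.2 (mul_le_mul_of_nonneg_left hs.2 hlam.le)
          have h5 : Real.exp (lam * δq) - 1 ≤ lam * δq * Real.exp lam := by
            have h51 := mul_le_mul_of_nonneg_left h3 (mul_nonneg hlam.le hδq.1.le)
            linarith
          rw [h1]
          have h6 : 0 ≤ Real.exp (lam * δq) - 1 := by
            linarith [Real.one_le_exp (mul_nonneg hlam.le hδq.1.le)]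
          have hA1 : Real.exp (lam*s) * (Real.exp (lam*δq) - 1)
              ≤ Real.exp (lam*T) * (Real.exp (lam*δq) - 1) :=
            mul_le_mul_of_nonneg_right h4 h6
          have hA2 : Real.exp (lam*T) * (Real.exp (lam*δq) - 1)
              ≤ Real.exp (lam*T) * (lam * δq * Real.exp lam) :=
            mul_le_mul_of_nonneg_left h5 (Real.exp_pos _).le
          nlinarith [hA1, hA2]
        have hb4 : |u ((Φ s z).1 + y)| ≤ Mu := by
          have h1 := hMu _ hw1
          rwa [Real.norm_eq_abs] at h1
        have hBpos : 0 ≤ Real.exp (lam * (s + δq)) - Real.exp (lam * s) := by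
          have h1 : Real.exp (lam*s) ≤ Real.exp (lam*(s+δq)) :=
            Real.exp_le_exp.2 (mul_le_mul_of_nonneg_left (by linarith [hδq.1.le]) hlam.le)
          linarith
        have hA : |Real.exp (lam * (s + δq))
            * (u ((Φ (s+δq) z).1 + y) - u ((Φ s z).1 + y))|
            ≤ Real.exp (lam*(T+1)) * (Ku * (CX * δq)) := by
          rw [abs_mul, abs_of_pos (Real.exp_pos _)]
          exact mul_le_mul hb2 hb1 (abs_nonneg _) (Real.exp_pos _).le
        have hB : |(Real.exp (lam * (s + δq)) - Real.exp (lam * s)) * u ((Φ s z).1 + y)|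
            ≤ (Real.exp (lam*T) * (lam * Real.exp lam) * δq) * Mu := by
          rw [abs_mul, abs_of_nonneg hBpos]
          refine mul_le_mul hb3 hb4 (abs_nonneg _) ?_
          exact mul_nonneg (mul_nonneg (Real.exp_pos _).le
            (mul_nonneg hlam.le (Real.exp_pos _).le)) hδq.1.le
        calc |h (s + δq) - h s| ≤ |Real.exp (lam * (s + δq))
              * (u ((Φ (s+δq) z).1 + y) - u ((Φ s z).1 + y))|
            + |(Real.exp (lam * (s + δq)) - Real.exp (lam * s)) * u ((Φ s z).1 + y)| := by
              rw [hid]; exact abs_add_le _ _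
          _ ≤ Real.exp (lam*(T+1)) * (Ku * (CX * δq))
              + (Real.exp (lam*T) * (lam * Real.exp lam) * δq) * Mu := add_le_add hA hB
          _ = Ch * δq := by rw [hChdef]; ring
      have hae : ∀ᵐ s : ℝ, s ∈ Ioo 0 T → ∃ dv, HasDerivAt h dv s ∧
          dv ≤ Real.exp (lam * s) * ℓ s + ε1 * Real.exp (lam * T) := by
        filter_upwards [hygood] with s hsdiff hsIoo
        set q : E n := gradient u ((Φ s z).1 + y) with hqdef2
        have hγd : HasDerivAt (fun t => (Φ t z).1 + y) (Hp H (Φ s z).1 (Φ s z).2) s :=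
          ((hflow z s).1).add_const y
        have hud : HasDerivAt (fun t => u ((Φ t z).1 + y))
            ((inner ℝ q (Hp H (Φ s z).1 (Φ s z).2) : ℝ)) s := by
          have h1 := (hsdiff.hasGradientAt.hasFDerivAt).comp_hasDerivAt s hγd
          rwa [InnerProductSpace.toDual_apply_apply] at h1
        have hhd : HasDerivAt h (Real.exp (lam*s) * lam * u ((Φ s z).1 + y)
            + Real.exp (lam*s) * (inner ℝ q (Hp H (Φ s z).1 (Φ s z).2) : ℝ)) s :=
          (hexp s).mul hud
        refine ⟨_, hhd, ?_⟩
        have hs1 : s ∈ Icc (0:ℝ) (T+1) := ⟨hsIoo.1.le, by linarith [hsIoo.2]⟩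
        have hHJ2 := hHJ _ hsdiff
        rw [← hqdef2] at hHJ2
        have hgi := aux_grad_ineq hH ((Φ s z).1 + y) ((Φ s z).2) q
        have hq_norm : ‖q‖ ≤ Ku := hgradb _ (hnbhd s hs1 y hyhalf) hsdiff
        have hP_norm : ‖(Φ s z).2‖ ≤ Mp := hMp s ⟨hsIoo.1.le, hsIoo.2.le⟩
        have hErrb : Err (s, y) < ε1 :=
          hδ0 s ⟨hsIoo.1.le, hsIoo.2.le⟩ y (lt_of_lt_of_le hyr (min_le_left _ _))
        have hAB : |(inner ℝ q (Hp H (Φ s z).1 (Φ s z).2) : ℝ)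
            - (inner ℝ q (Hp H ((Φ s z).1 + y) (Φ s z).2) : ℝ)|
            ≤ Ku * ‖Hp H ((Φ s z).1 + y) (Φ s z).2 - Hp H (Φ s z).1 (Φ s z).2‖ := by
          rw [← inner_sub_right]
          calc |(inner ℝ q (Hp H (Φ s z).1 (Φ s z).2
                - Hp H ((Φ s z).1 + y) (Φ s z).2) : ℝ)|
              ≤ ‖q‖ * ‖Hp H (Φ s z).1 (Φ s z).2 - Hp H ((Φ s z).1 + y) (Φ s z).2‖ :=
                abs_real_inner_le_norm _ _
            _ ≤ Ku * ‖Hp H (Φ s z).1 (Φ s z).2 - Hp H ((Φ s z).1 + y) (Φ s z).2‖ :=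
                mul_le_mul_of_nonneg_right hq_norm (norm_nonneg _)
            _ = Ku * ‖Hp H ((Φ s z).1 + y) (Φ s z).2 - Hp H (Φ s z).1 (Φ s z).2‖ := by
                rw [norm_sub_rev]
        have hCD : |(inner ℝ ((Φ s z).2) (Hp H ((Φ s z).1 + y) (Φ s z).2) : ℝ)
            - (inner ℝ ((Φ s z).2) (Hp H (Φ s z).1 (Φ s z).2) : ℝ)|
            ≤ Mp * ‖Hp H ((Φ s z).1 + y) (Φ s z).2 - Hp H (Φ s z).1 (Φ s z).2‖ := by
          rw [← inner_sub_right]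
          calc |(inner ℝ ((Φ s z).2) (Hp H ((Φ s z).1 + y) (Φ s z).2
                - Hp H (Φ s z).1 (Φ s z).2) : ℝ)|
              ≤ ‖(Φ s z).2‖ * ‖Hp H ((Φ s z).1 + y) (Φ s z).2
                - Hp H (Φ s z).1 (Φ s z).2‖ := abs_real_inner_le_norm _ _
            _ ≤ Mp * ‖Hp H ((Φ s z).1 + y) (Φ s z).2 - Hp H (Φ s z).1 (Φ s z).2‖ :=
                mul_le_mul_of_nonneg_right hP_norm (norm_nonneg _)
        have hgi' : (inner ℝ (Hp H ((Φ s z).1 + y) (Φ s z).2) q : ℝ)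
            - (inner ℝ (Hp H ((Φ s z).1 + y) (Φ s z).2) ((Φ s z).2) : ℝ)
            ≤ H ((Φ s z).1 + y, q) - H ((Φ s z).1 + y, (Φ s z).2) := by
          rw [← inner_sub_right]
          exact hgi
        have he1 : (inner ℝ (Hp H ((Φ s z).1 + y) (Φ s z).2) q : ℝ)
            = (inner ℝ q (Hp H ((Φ s z).1 + y) (Φ s z).2) : ℝ) := real_inner_comm _ _
        have he2 : (inner ℝ (Hp H ((Φ s z).1 + y) (Φ s z).2) ((Φ s z).2) : ℝ)
            = (inner ℝ ((Φ s z).2) (Hp H ((Φ s z).1 + y) (Φ s z).2) : ℝ) := real_inner_comm _ _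
        have hErr_eq : Err (s, y)
            = (Ku + Mp) * ‖Hp H ((Φ s z).1 + y) (Φ s z).2 - Hp H (Φ s z).1 (Φ s z).2‖
            + |H ((Φ s z).1, (Φ s z).2) - H ((Φ s z).1 + y, (Φ s z).2)| := by
          rw [hErrdef]
        have hHeta : H (Φ s z) = H ((Φ s z).1, (Φ s z).2) := rfl
        have hl_eq : ℓ s = (inner ℝ ((Φ s z).2) (Hp H (Φ s z).1 (Φ s z).2) : ℝ)
            - H ((Φ s z).1, (Φ s z).2) := by rw [hldef]
        have hexpand : (Ku + Mp) * ‖Hp H ((Φ s z).1 + y) (Φ s z).2 - Hp H (Φ s z).1 (Φ s z).2‖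
            = Ku * ‖Hp H ((Φ s z).1 + y) (Φ s z).2 - Hp H (Φ s z).1 (Φ s z).2‖
            + Mp * ‖Hp H ((Φ s z).1 + y) (Φ s z).2 - Hp H (Φ s z).1 (Φ s z).2‖ := by ring
        have habs1 := abs_le.1 hAB
        have habs2 := abs_le.1 hCD
        have habs3 : H ((Φ s z).1, (Φ s z).2) - H ((Φ s z).1 + y, (Φ s z).2)
            ≤ |H ((Φ s z).1, (Φ s z).2) - H ((Φ s z).1 + y, (Φ s z).2)| := le_abs_self _
        have hcore : (inner ℝ q (Hp H (Φ s z).1 (Φ s z).2) : ℝ) - H ((Φ s z).1 + y, q)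
            ≤ ℓ s + Err (s, y) := by
          rw [hl_eq, hErr_eq, hexpand]
          rw [he1, he2] at hgi'
          linarith [habs1.1, habs1.2, habs2.1, habs2.2, habs3, hgi']
        have hval : Real.exp (lam*s) * lam * u ((Φ s z).1 + y)
            + Real.exp (lam*s) * (inner ℝ q (Hp H (Φ s z).1 (Φ s z).2) : ℝ)
            = Real.exp (lam*s) * ((inner ℝ q (Hp H (Φ s z).1 (Φ s z).2) : ℝ)
              - H ((Φ s z).1 + y, q)) := by
          have h6 : lam * u ((Φ s z).1 + y) = -H ((Φ s z).1 + y, q) := by linarith [hHJ2]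
          rw [mul_assoc, h6]
          ring
        rw [hval]
        have hstep : (inner ℝ q (Hp H (Φ s z).1 (Φ s z).2) : ℝ) - H ((Φ s z).1 + y, q)
            ≤ ℓ s + ε1 := by linarith [hcore, hErrb]
        have hm1 : Real.exp (lam*s) * ((inner ℝ q (Hp H (Φ s z).1 (Φ s z).2) : ℝ)
            - H ((Φ s z).1 + y, q)) ≤ Real.exp (lam*s) * (ℓ s + ε1) :=
          mul_le_mul_of_nonneg_left hstep (Real.exp_pos _).le
        have hm2 : Real.exp (lam*s) ≤ Real.exp (lam*T) :=
          Real.exp_le_exp.2 (mul_le_mul_of_nonneg_left hsIoo.2.le hlam.le)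
        have hm3 : Real.exp (lam*s) * ε1 ≤ Real.exp (lam*T) * ε1 :=
          mul_le_mul_of_nonneg_right hm2 hε1pos.le
        linarith [hm1, hm3]
      have hftc := aux_ftc_le hT hhc
        (g := fun s => Real.exp (lam * s) * ℓ s + ε1 * Real.exp (lam * T))
        ((hexpc.mul hlc).add continuous_const) hquot hae
      have hint : ∫ s in (0:ℝ)..T, (Real.exp (lam * s) * ℓ s + ε1 * Real.exp (lam * T)) =
          I + T * (ε1 * Real.exp (lam * T)) := by
        rw [intervalIntegral.integral_add (f := fun s => Real.exp (lam * s) * ℓ s) ((hexpc.mul hlc).intervalIntegrable _ _)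
          (intervalIntegrable_const)]
        rw [intervalIntegral.integral_const]
        rw [← hIdef]
        simp
      rw [hint] at hftc
      have hh0 : h 0 = u ((Φ 0 z).1 + y) := by
        rw [hhdef]; simp
      have hhT : h T = Real.exp (lam*T) * u ((Φ T z).1 + y) := rfl
      have hend1 : |u ((Φ T z).1 + y) - u ((Φ T z).1)| ≤ Ku * ‖y‖ := by
        have h1 := hKu _ (hmem T ⟨hT, by linarith⟩ y hy1) _ (hmem0 T ⟨hT, by linarith⟩)
        rw [Real.dist_eq] at h1
        have h2 : dist ((Φ T z).1 + y) ((Φ T z).1) = ‖y‖ := by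
          rw [dist_eq_norm]; simp
        rwa [h2] at h1
      have hend0 : |u ((Φ 0 z).1 + y) - u ((Φ 0 z).1)| ≤ Ku * ‖y‖ := by
        have h1 := hKu _ (hmem 0 ⟨le_refl 0, by linarith⟩ y hy1)
          _ (hmem0 0 ⟨le_refl 0, by linarith⟩)
        rw [Real.dist_eq] at h1
        have h2 : dist ((Φ 0 z).1 + y) ((Φ 0 z).1) = ‖y‖ := by
          rw [dist_eq_norm]; simp
        rwa [h2] at h1
      -- numeric assembly
      have heT1 : (0:ℝ) < Real.exp (lam*T) := Real.exp_pos _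
      have hr2 : ‖y‖ ≤ ε / (2 * ((Real.exp (lam*T) + 1) * Ku + 1)) :=
        le_trans hyr.le ((min_le_right _ _).trans (min_le_right _ _))
      have hb1 : T * (ε1 * Real.exp (lam*T)) ≤ ε / 2 := by
        rw [hε1def]
        have hden : (0:ℝ) < 2 * (Real.exp (lam*T) * (T+1) + 1) := by
          have := mul_pos heT1 (by linarith : (0:ℝ) < T + 1)
          linarith
        have heq2 : T * (ε / (2 * (Real.exp (lam*T) * (T+1) + 1)) * Real.exp (lam*T))
            = ε * (T * Real.exp (lam*T)) / (2 * (Real.exp (lam*T) * (T+1) + 1)) := by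
          ring
        rw [heq2, div_le_div_iff₀ hden (by norm_num : (0:ℝ) < 2)]
        nlinarith [mul_nonneg hε.le heT1.le]
      have hb2 : (Real.exp (lam*T) + 1) * (Ku * ‖y‖) ≤ ε / 2 := by
        have h1 : (Real.exp (lam*T) + 1) * Ku * ‖y‖
            ≤ (Real.exp (lam*T) + 1) * Ku
              * (ε / (2 * ((Real.exp (lam*T) + 1) * Ku + 1))) :=
          mul_le_mul_of_nonneg_left hr2
            (mul_nonneg (by linarith) hKu0)
        have h2 : (Real.exp (lam*T) + 1) * Ku
            * (ε / (2 * ((Real.exp (lam*T) + 1) * Ku + 1))) ≤ ε / 2 := by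
          have heq3 : (Real.exp (lam*T) + 1) * Ku
              * (ε / (2 * ((Real.exp (lam*T) + 1) * Ku + 1)))
              = ε * ((Real.exp (lam*T) + 1) * Ku) / (2 * ((Real.exp (lam*T) + 1) * Ku + 1)) := by
            ring
          rw [heq3, div_le_div_iff₀ hden2 (by norm_num : (0:ℝ) < 2)]
          nlinarith [hε.le]
        calc (Real.exp (lam*T) + 1) * (Ku * ‖y‖)
            = (Real.exp (lam*T) + 1) * Ku * ‖y‖ := by ring
          _ ≤ _ := h1
          _ ≤ ε / 2 := h2
      have habsT := abs_le.1 hend1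
      have habs0 := abs_le.1 hend0
      have hKuy : 0 ≤ Ku * ‖y‖ := mul_nonneg hKu0 (norm_nonneg _)
      -- final chain
      have hchain : Real.exp (lam * T) * u ((Φ T z).1) - u ((Φ 0 z).1)
          ≤ I + T * (ε1 * Real.exp (lam * T)) + (Real.exp (lam*T) + 1) * (Ku * ‖y‖) := by
        have h1 : h T - h 0 ≤ I + T * (ε1 * Real.exp (lam * T)) := hftc
        rw [hhT, hh0] at h1
        have hTm : Real.exp (lam * T) * u ((Φ T z).1)
            ≤ Real.exp (lam * T) * (u ((Φ T z).1 + y) + Ku * ‖y‖) :=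
          mul_le_mul_of_nonneg_left (by linarith [habsT.1]) heT1.le
        nlinarith [hTm, habs0.2, h1]
      rw [hz0] at hchain
      calc Real.exp (lam * T) * u ((Φ T z).1) - u z.1
          ≤ I + T * (ε1 * Real.exp (lam * T)) + (Real.exp (lam*T) + 1) * (Ku * ‖y‖) := hchain
        _ ≤ I + ε / 2 + ε / 2 := by linarith [hb1, hb2]
        _ = I + ε := by ring
    -- combine A and B
    have h3 := mul_le_mul_of_nonneg_left hpartB hlam.le
    rw [mul_sub] at h3
    have hcomb : (lam * u ((Φ T z).1) + H (Φ T z)) * Real.exp (lam * T)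
        ≤ lam * u z.1 + H z := by nlinarith [h3, hpartA, hlam.le]
    rw [Real.exp_neg, ← div_eq_mul_inv, le_div_iff₀ (Real.exp_pos _)]
    exact hcomb
  refine ⟨main, ?_⟩
  intro z hz t ht
  have h1 := main z t ht
  have h2 : (lam * u z.1 + H z) * Real.exp (-(lam * t)) ≤ 0 :=
    mul_nonpos_of_nonpos_of_nonneg hz (Real.exp_pos _).le
  linarith

end
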